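/- Let n ≥ 2 and let Ψ be an n×n complex matrix whose spectrum is contained in the open unit disk. For θ ∈ ℝ and α : Fin (n−1) → ℂ with |α j| ≤ 1 for all j, define the Blaschke product of Ψ as B(θ,α)(Ψ) := exp(iθ) • ∏_{j} (Ψ − (α j)•1) * ((1 − conj(α j)•Ψ)⁻¹) (the factors pairwise commute, so the product is independent of ordering). Suppose (θ₀, α₀) maximizes the ℓ² operator norm: ‖B(θ,α)(Ψ)‖ ≤ ‖B(θ₀,α₀)(Ψ)‖ for all admissible (θ, α). Set M := B(θ₀,α₀)(Ψ) and assume ‖M‖ > 1. Then for every unit vector v ∈ EuclideanSpace ℂ (Fin n) with ‖M v‖ = ‖M‖ (i.e. v is a right singular vector of M for the largest singular value), one has ⟪M v, v⟫ = 0. -/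

import Mathlib

open Matrix Complex

noncomputable def l2opNorm {n : ℕ} (M : Matrix (Fin n) (Fin n) ℂ) : ℝ :=
  ‖(Matrix.toEuclideanCLM (𝕜 := ℂ) M : EuclideanSpace ℂ (Fin n) →L[ℂ] EuclideanSpace ℂ (Fin n))‖

open Polynomial

namespace OBO


noncomputable def Pl (l : List ℂ) : Polynomial ℂ := (l.map (fun α => X - C α)).prod
noncomputable def Ql (l : List ℂ) : Polynomial ℂ :=
  (l.map (fun α => 1 - C ((starRingEnd ℂ) α) * X)).prod

lemma Pl_nil : Pl [] = 1 := by simp [Pl]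
lemma Ql_nil : Ql [] = 1 := by simp [Ql]
lemma Pl_cons (a : ℂ) (l : List ℂ) : Pl (a :: l) = (X - C a) * Pl l := by
  simp [Pl, List.prod_cons]
lemma Ql_cons (a : ℂ) (l : List ℂ) :
    Ql (a :: l) = (1 - C ((starRingEnd ℂ) a) * X) * Ql l := by
  simp [Ql, List.prod_cons]

lemma eval_Pl (z : ℂ) (l : List ℂ) : (Pl l).eval z = (l.map (fun α => z - α)).prod := by
  induction l with
  | nil => simp [Pl_nil]
  | cons a l ih => simp [Pl_cons, ih, List.prod_cons]

lemma eval_Ql (z : ℂ) (l : List ℂ) :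
    (Ql l).eval z = (l.map (fun α => 1 - (starRingEnd ℂ) α * z)).prod := by
  induction l with
  | nil => simp [Ql_nil]
  | cons a l ih => simp [Ql_cons, ih, List.prod_cons]

lemma reflect_Ql (l : List ℂ) (z : ℂ) (hz : z ≠ 0) :
    (Ql l).eval z =
      z ^ l.length * (starRingEnd ℂ) ((Pl l).eval (((starRingEnd ℂ) z)⁻¹)) := by
  induction l with
  | nil => simp [Ql_nil, Pl_nil]
  | cons a l ih =>
    have hz' : ((starRingEnd ℂ) z)⁻¹ = z⁻¹ → True := fun _ => trivial
    rw [Ql_cons, Pl_cons, eval_mul, eval_mul, ih, _root_.map_mul]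
    simp only [eval_sub, eval_one, eval_mul, eval_C, eval_X, map_sub, _root_.map_one,
      _root_.map_mul, map_inv₀, Complex.conj_conj, List.length_cons, pow_succ]
    field_simp

lemma reflect_Pl (l : List ℂ) (z : ℂ) (hz : z ≠ 0) :
    (Pl l).eval z =
      z ^ l.length * (starRingEnd ℂ) ((Ql l).eval (((starRingEnd ℂ) z)⁻¹)) := by
  induction l with
  | nil => simp [Ql_nil, Pl_nil]
  | cons a l ih =>
    rw [Ql_cons, Pl_cons, eval_mul, eval_mul, ih, _root_.map_mul]
    simp only [eval_sub, eval_one, eval_mul, eval_C, eval_X, map_sub, _root_.map_one,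
      _root_.map_mul, map_inv₀, Complex.conj_conj, List.length_cons, pow_succ]
    field_simp

lemma Pl_monic (l : List ℂ) : (Pl l).Monic := by
  induction l with
  | nil => simpa [Pl_nil] using monic_one
  | cons a l ih => rw [Pl_cons]; exact (monic_X_sub_C a).mul ih

lemma Pl_natDegree (l : List ℂ) : (Pl l).natDegree = l.length := by
  induction l with
  | nil => simp [Pl_nil]
  | cons a l ih =>
    rw [Pl_cons, (monic_X_sub_C a).natDegree_mul (Pl_monic l), natDegree_X_sub_C, ih,
      List.length_cons]
    omega

lemma Ql_natDegree_le (l : List ℂ) : (Ql l).natDegree ≤ l.length := by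
  induction l with
  | nil => simp [Ql_nil]
  | cons a l ih =>
    rw [Ql_cons]
    refine (natDegree_mul_le).trans ?_
    have h1 : (1 - C ((starRingEnd ℂ) a) * X : Polynomial ℂ).natDegree ≤ 1 := by
      refine (natDegree_sub_le _ _).trans ?_
      have := natDegree_C_mul_le ((starRingEnd ℂ) a) (X : Polynomial ℂ)
      simp only [natDegree_one, natDegree_X] at *
      omega
    rw [List.length_cons]
    omega

lemma Ql_coeff_len (l : List ℂ) (h : ∀ x ∈ l, ‖x‖ ≤ 1) :
    ‖(Ql l).coeff l.length‖ ≤ 1 := by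
  induction l with
  | nil => simp [Ql_nil]
  | cons a l ih =>
    have hq : Ql (a :: l) = Ql l - C ((starRingEnd ℂ) a) * (X * Ql l) := by
      rw [Ql_cons]; ring
    rw [hq, List.length_cons, coeff_sub, coeff_C_mul, coeff_X_mul]
    rw [coeff_eq_zero_of_natDegree_lt (lt_of_le_of_lt (Ql_natDegree_le l) (by omega))]
    rw [zero_sub, norm_neg, norm_mul, Complex.norm_conj]
    have h1 := ih (fun x hx => h x (List.mem_cons_of_mem a hx))
    have h2 := h a (List.mem_cons_self)
    calc ‖a‖ * ‖(Ql l).coeff l.length‖ ≤ 1 * 1 :=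
      mul_le_mul h2 h1 (norm_nonneg _) zero_le_one
    _ = 1 := by ring


lemma key_abs {z α : ℂ} (hz : 1 ≤ ‖z‖) (hα : ‖α‖ ≤ 1) :
    ‖1 - (starRingEnd ℂ) α * z‖ ≤ ‖z - α‖ := by
  have h1 : Complex.normSq (1 - (starRingEnd ℂ) α * z) ≤ Complex.normSq (z - α) := by
    have hz2 : 1 ≤ Complex.normSq z := by
      have := Complex.sq_norm z; nlinarith [norm_nonneg z]
    have ha2 : Complex.normSq α ≤ 1 := by
      have := Complex.sq_norm α; nlinarith [norm_nonneg α]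
    simp only [Complex.normSq_apply, Complex.sub_re, Complex.sub_im, Complex.mul_re,
      Complex.mul_im, Complex.conj_re, Complex.conj_im, Complex.one_re, Complex.one_im,
      Complex.normSq_apply] at *
    nlinarith [sq_nonneg (z.re - α.re), sq_nonneg (z.im - α.im)]
  rw [Complex.norm_def, Complex.norm_def]
  exact Real.sqrt_le_sqrt h1

lemma abs_Q_le_abs_P {z : ℂ} (hz : 1 ≤ ‖z‖) (l : List ℂ)
    (h : ∀ x ∈ l, ‖x‖ ≤ 1) :
    ‖(Ql l).eval z‖ ≤ ‖(Pl l).eval z‖ := by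
  rw [eval_Pl, eval_Ql]
  induction l with
  | nil => simp
  | cons a l ih =>
    simp only [List.map_cons, List.prod_cons, norm_mul]
    exact mul_le_mul (key_abs hz (h a (List.mem_cons_self)))
      (ih (fun x hx => h x (List.mem_cons_of_mem a hx))) (norm_nonneg _)
      (norm_nonneg _)

lemma Pl_eval_ne_zero {z : ℂ} (hz : 1 < ‖z‖) (l : List ℂ)
    (h : ∀ x ∈ l, ‖x‖ ≤ 1) : (Pl l).eval z ≠ 0 := by
  rw [eval_Pl]
  refine List.prod_ne_zero ?_
  intro hx
  rw [List.mem_map] at hx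
  obtain ⟨α, hα, hzero⟩ := hx
  have hzα : z = α := sub_eq_zero.mp hzero
  rw [hzα] at hz
  exact absurd (h α hα) (not_le.mpr hz)

lemma root_bound (l : List ℂ) (h : ∀ x ∈ l, ‖x‖ ≤ 1) {c₀ a : ℂ}
    (hc₀ : ‖c₀‖ = 1) (ha : ‖a‖ < 1) {z : ℂ}
    (hz : (C c₀ * Pl l - C a * Ql l).eval z = 0) : ‖z‖ ≤ 1 := by
  by_contra hz1
  push_neg at hz1
  have hP := Pl_eval_ne_zero hz1 l h
  have hPQ := abs_Q_le_abs_P hz1.le l h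
  have heq : c₀ * (Pl l).eval z = a * (Ql l).eval z := by
    have := hz
    simp only [eval_sub, eval_mul, eval_C] at this
    exact sub_eq_zero.mp this
  have habs : ‖(Pl l).eval z‖ = ‖a‖ * ‖(Ql l).eval z‖ := by
    have := congrArg (‖·‖) heq
    simpa [norm_mul, hc₀] using this
  have hpos : 0 < ‖(Pl l).eval z‖ := by
    simpa [norm_pos_iff] using hP
  nlinarith [mul_le_mul_of_nonneg_left hPQ (norm_nonneg a)]

variable {n : ℕ} (Ψ : Matrix (Fin n) (Fin n) ℂ)

/-- The Blaschke factor of the matrix Ψ. -/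
noncomputable def fac (α : ℂ) : Matrix (Fin n) (Fin n) ℂ :=
  (Ψ - α • 1) * (1 - (starRingEnd ℂ) α • Ψ)⁻¹

noncomputable def F (l : List ℂ) : Matrix (Fin n) (Fin n) ℂ := (l.map (fac Ψ)).prod

lemma unit_one_sub_smul (hspec : spectrum ℂ Ψ ⊆ Metric.ball 0 1) {c : ℂ} (hc : ‖c‖ ≤ 1) :
    IsUnit ((1 : Matrix (Fin n) (Fin n) ℂ) - c • Ψ) := by
  rcases eq_or_ne c 0 with rfl | hc0
  · simp
  · have h1 : c⁻¹ ∉ spectrum ℂ Ψ := by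
      intro hmem
      have := hspec hmem
      rw [Metric.mem_ball, dist_zero_right, norm_inv] at this
      have hpos : (0:ℝ) < ‖c‖ := by simpa [norm_pos_iff] using hc0
      rw [inv_lt_one₀ hpos] at this
      linarith
    have h2 : IsUnit (algebraMap ℂ (Matrix (Fin n) (Fin n) ℂ) c⁻¹ - Ψ) :=
      spectrum.notMem_iff.mp h1
    have h3 : IsUnit (algebraMap ℂ (Matrix (Fin n) (Fin n) ℂ) c) :=
      (isUnit_iff_ne_zero.mpr hc0).map (algebraMap ℂ (Matrix (Fin n) (Fin n) ℂ))
    have h4 := h3.mul h2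
    have h5 : algebraMap ℂ (Matrix (Fin n) (Fin n) ℂ) c *
        (algebraMap ℂ (Matrix (Fin n) (Fin n) ℂ) c⁻¹ - Ψ) = 1 - c • Ψ := by
      rw [mul_sub, ← _root_.map_mul, mul_inv_cancel₀ hc0, _root_.map_one, Algebra.algebraMap_eq_smul_one,
        smul_mul_assoc, one_mul]
    rwa [h5] at h4

lemma commute_inv_right {A B : Matrix (Fin n) (Fin n) ℂ} (h : IsUnit B) (hc : Commute A B) :
    Commute A B⁻¹ := by
  letI := h.invertible
  rw [← Matrix.invOf_eq_nonsing_inv]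
  exact hc.invOf_right

lemma commute_lin (x y : ℂ) :
    Commute ((1 : Matrix (Fin n) (Fin n) ℂ) - x • Ψ) (Ψ - y • 1) := by
  unfold Commute SemiconjBy
  simp only [sub_mul, mul_sub, smul_mul_assoc, mul_smul_comm, one_mul, mul_one, smul_sub,
    smul_smul]
  rw [mul_comm x y]
  abel

lemma commute_fac_lin (hspec : spectrum ℂ Ψ ⊆ Metric.ball 0 1) {β x : ℂ} (hβ : ‖β‖ ≤ 1) :
    Commute (fac Ψ β) ((1 : Matrix (Fin n) (Fin n) ℂ) - x • Ψ) := by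
  have h1 : Commute (Ψ - β • 1) (1 - x • Ψ) := (commute_lin Ψ x β).symm
  have hu : IsUnit ((1 : Matrix (Fin n) (Fin n) ℂ) - (starRingEnd ℂ) β • Ψ) :=
    unit_one_sub_smul Ψ hspec (by simpa using hβ)
  have h2 : Commute ((1 : Matrix (Fin n) (Fin n) ℂ) - (starRingEnd ℂ) β • Ψ)⁻¹
      (1 - x • Ψ) := by
    have := commute_inv_right (A := (1 : Matrix (Fin n) (Fin n) ℂ) - x • Ψ) hu ?_
    · exact this.symm
    · -- Commute (1 - x•Ψ) (1 - conj β • Ψ)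
      unfold Commute SemiconjBy
      simp only [sub_mul, mul_sub, smul_mul_assoc, mul_smul_comm, one_mul, mul_one, smul_sub,
        smul_smul]
      rw [mul_comm x ((starRingEnd ℂ) β)]
      abel
  exact h1.mul_left h2

lemma commute_F_lin (hspec : spectrum ℂ Ψ ⊆ Metric.ball 0 1) {x : ℂ} (l : List ℂ) (h : ∀ α ∈ l, ‖α‖ ≤ 1) :
    Commute (F Ψ l) ((1 : Matrix (Fin n) (Fin n) ℂ) - x • Ψ) := by
  unfold F
  refine Commute.list_prod_left _ _ ?_
  intro A hA
  rw [List.mem_map] at hA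
  obtain ⟨β, hβ, rfl⟩ := hA
  exact commute_fac_lin Ψ hspec (h β hβ)

lemma aeval_Ql_cons (a : ℂ) (l : List ℂ) :
    Polynomial.aeval Ψ (Ql (a :: l)) =
      ((1 : Matrix (Fin n) (Fin n) ℂ) - (starRingEnd ℂ) a • Ψ) * Polynomial.aeval Ψ (Ql l) := by
  rw [Ql_cons, _root_.map_mul]
  congr 1
  rw [map_sub, _root_.map_one, _root_.map_mul, aeval_C, aeval_X, ← Algebra.smul_def]

lemma aeval_Pl_cons (a : ℂ) (l : List ℂ) :
    Polynomial.aeval Ψ (Pl (a :: l)) =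
      (Ψ - a • 1) * Polynomial.aeval Ψ (Pl l) := by
  rw [Pl_cons, _root_.map_mul]
  congr 1
  rw [map_sub, aeval_C, aeval_X, Algebra.algebraMap_eq_smul_one]

lemma unit_aeval_Ql (hspec : spectrum ℂ Ψ ⊆ Metric.ball 0 1) (l : List ℂ) (h : ∀ α ∈ l, ‖α‖ ≤ 1) :
    IsUnit (Polynomial.aeval Ψ (Ql l)) := by
  induction l with
  | nil => rw [Ql_nil]; simp
  | cons a l ih =>
    rw [aeval_Ql_cons]
    exact (unit_one_sub_smul Ψ hspec (by simpa using h a (List.mem_cons_self))).mul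
      (ih (fun x hx => h x (List.mem_cons_of_mem a hx)))

lemma F_mul_aeval_Ql (hspec : spectrum ℂ Ψ ⊆ Metric.ball 0 1) (l : List ℂ) (h : ∀ α ∈ l, ‖α‖ ≤ 1) :
    F Ψ l * Polynomial.aeval Ψ (Ql l) = Polynomial.aeval Ψ (Pl l) := by
  induction l with
  | nil => simp [F, Ql_nil, Pl_nil]
  | cons a l ih =>
    have ha : ‖a‖ ≤ 1 := h a (List.mem_cons_self)
    have hl : ∀ α ∈ l, ‖α‖ ≤ 1 := fun x hx => h x (List.mem_cons_of_mem a hx)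
    have hFcons : F Ψ (a :: l) = fac Ψ a * F Ψ l := by
      simp [F, List.prod_cons]
    rw [hFcons, aeval_Ql_cons, aeval_Pl_cons]
    have hcomm : F Ψ l * ((1 : Matrix (Fin n) (Fin n) ℂ) - (starRingEnd ℂ) a • Ψ)
        = ((1 : Matrix (Fin n) (Fin n) ℂ) - (starRingEnd ℂ) a • Ψ) * F Ψ l :=
      commute_F_lin Ψ hspec l hl
    have hu : IsUnit ((1 : Matrix (Fin n) (Fin n) ℂ) - (starRingEnd ℂ) a • Ψ) :=
      unit_one_sub_smul Ψ hspec (by simpa using ha)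
    calc fac Ψ a * F Ψ l * (((1 : Matrix (Fin n) (Fin n) ℂ) - (starRingEnd ℂ) a • Ψ)
          * Polynomial.aeval Ψ (Ql l))
        = fac Ψ a * (F Ψ l * ((1 : Matrix (Fin n) (Fin n) ℂ) - (starRingEnd ℂ) a • Ψ))
          * Polynomial.aeval Ψ (Ql l) := by simp only [mul_assoc]
      _ = fac Ψ a * (((1 : Matrix (Fin n) (Fin n) ℂ) - (starRingEnd ℂ) a • Ψ) * F Ψ l)
          * Polynomial.aeval Ψ (Ql l) := by rw [hcomm]
      _ = (fac Ψ a * ((1 : Matrix (Fin n) (Fin n) ℂ) - (starRingEnd ℂ) a • Ψ))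
          * (F Ψ l * Polynomial.aeval Ψ (Ql l)) := by simp only [mul_assoc]
      _ = (Ψ - a • 1) * Polynomial.aeval Ψ (Pl l) := by
          rw [ih hl]
          congr 1
          unfold fac
          rw [mul_assoc, Matrix.nonsing_inv_mul _ ((Matrix.isUnit_iff_isUnit_det _).mp hu),
            mul_one]

end OBO

lemma OBO.endgame {s t q : ℝ} (hs1 : 1 < s) (ht0 : 0 < t) (hq : 0 < q)
    (hts : t * (s^2+1) ≤ 1)
    (hsq : s ^ 2 - 2 * (t * q) + t ^ 2 * q ≤ s ^ 2 * (1 - 2 * (t * q) + t ^ 2 * q * s ^ 2)) :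
    False := by
  have h9 : 0 < s^2 - 1 := by nlinarith
  have key : (2 * (t*q)) * (s^2-1) ≤ ((t^2*q)*(s^2+1)) * (s^2-1) := by nlinarith
  have h10 : 2 * (t*q) ≤ (t^2*q)*(s^2+1) := le_of_mul_le_mul_right key h9
  have h11 : (t*q) * 2 ≤ (t*q) * (t*(s^2+1)) := by nlinarith
  have h12 : (2:ℝ) ≤ t*(s^2+1) := le_of_mul_le_mul_left h11 (by positivity)
  linarith

open OBO in
theorem optimal_blaschke_orthogonality
    {n : ℕ} (hn : 2 ≤ n) (Ψ : Matrix (Fin n) (Fin n) ℂ)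
    (hspec : spectrum ℂ Ψ ⊆ Metric.ball 0 1)
    (B : ℝ → (Fin (n - 1) → ℂ) → Matrix (Fin n) (Fin n) ℂ)
    (hB : ∀ (θ : ℝ) (α : Fin (n - 1) → ℂ),
      B θ α = Complex.exp ((θ : ℂ) * I) •
        (List.ofFn (fun j : Fin (n - 1) =>
          (Ψ - α j • (1 : Matrix (Fin n) (Fin n) ℂ)) *
            ((1 : Matrix (Fin n) (Fin n) ℂ) - (starRingEnd ℂ) (α j) • Ψ)⁻¹)).prod)
    (θ₀ : ℝ) (α₀ : Fin (n - 1) → ℂ)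
    (hα₀ : ∀ j, ‖α₀ j‖ ≤ 1)
    (hmax : ∀ (θ : ℝ) (α : Fin (n - 1) → ℂ), (∀ j, ‖α j‖ ≤ 1) →
      l2opNorm (B θ α) ≤ l2opNorm (B θ₀ α₀))
    (hnorm : 1 < l2opNorm (B θ₀ α₀)) :
    ∀ v : EuclideanSpace ℂ (Fin n), ‖v‖ = 1 →
      ‖(Matrix.toEuclideanCLM (𝕜 := ℂ) (B θ₀ α₀)) v‖ = l2opNorm (B θ₀ α₀) →
      (inner ℂ ((Matrix.toEuclideanCLM (𝕜 := ℂ) (B θ₀ α₀)) v) v : ℂ) = 0 := by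
  intro v hv hvnorm
  classical
  by_contra hc
  -- notation
  set s : ℝ := l2opNorm (B θ₀ α₀) with hsdef
  set M' := Matrix.toEuclideanCLM (𝕜 := ℂ) (B θ₀ α₀) with hM'def
  set c : ℂ := inner ℂ (M' v) v with hcdef
  have hs1 : 1 < s := hnorm
  have hcabs : 0 < ‖c‖ := by
    rw [norm_pos_iff]; exact hc
  -- the perturbation parameter
  set t : ℝ := min ((s^2+1)⁻¹) ((2*‖c‖)⁻¹) with htdef
  have ht0 : 0 < t := lt_min (by positivity) (by positivity)
  set a : ℂ := (t : ℂ) * (starRingEnd ℂ) c with hadef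
  have haabs : ‖a‖ = t * ‖c‖ := by
    rw [hadef, norm_mul, Complex.norm_conj, Complex.norm_real, Real.norm_eq_abs, abs_of_pos ht0]
  have ha1 : ‖a‖ < 1 := by
    have h1 : t * ‖c‖ ≤ (2*‖c‖)⁻¹ * ‖c‖ :=
      mul_le_mul_of_nonneg_right (min_le_right _ _) (norm_nonneg c)
    have h2 : (2*‖c‖)⁻¹ * ‖c‖ = 1/2 := by
      field_simp
    rw [haabs]
    rw [h2] at h1
    linarith
  -- Blaschke data
  set c₀ : ℂ := Complex.exp ((θ₀ : ℂ) * I) with hc₀def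
  have hc₀ : ‖c₀‖ = 1 := Complex.norm_exp_ofReal_mul_I θ₀
  have hc₀ne : c₀ ≠ 0 := by
    intro h; rw [h] at hc₀; simp at hc₀
  set l₀ : List ℂ := List.ofFn α₀ with hl₀def
  have hl₀len : l₀.length = n - 1 := List.length_ofFn (f := α₀)
  have hl₀mem : ∀ x ∈ l₀, ‖x‖ ≤ 1 := by
    intro x hx
    rw [hl₀def, List.mem_ofFn] at hx
    obtain ⟨j, rfl⟩ := hx
    exact hα₀ j
  have hM : B θ₀ α₀ = c₀ • F Ψ l₀ := by
    rw [hB θ₀ α₀]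
    congr 1
    rw [hl₀def]
    unfold OBO.F OBO.fac
    rw [List.map_ofFn]
    rfl
  -- the numerator polynomial and its roots
  set N : Polynomial ℂ := Polynomial.C c₀ * Pl l₀ - Polynomial.C a * Ql l₀ with hNdef
  have hPl_coeff : (Pl l₀).coeff (n-1) = 1 := by
    have h2 := Pl_natDegree l₀
    rw [hl₀len] at h2
    have := (Pl_monic l₀).coeff_natDegree
    rwa [h2] at this
  have hQc : ‖(Ql l₀).coeff (n-1)‖ ≤ 1 := by
    have := Ql_coeff_len l₀ hl₀mem
    rwa [hl₀len] at this
  have hNcoeff : N.coeff (n-1) = c₀ - a * (Ql l₀).coeff (n-1) := by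
    rw [hNdef, Polynomial.coeff_sub, Polynomial.coeff_C_mul, Polynomial.coeff_C_mul, hPl_coeff,
      mul_one]
  have hNc0 : N.coeff (n-1) ≠ 0 := by
    rw [hNcoeff]
    intro h0
    have h1 : c₀ = a * (Ql l₀).coeff (n-1) := sub_eq_zero.mp h0
    have h2 := congrArg (‖·‖) h1
    rw [hc₀, norm_mul] at h2
    nlinarith [norm_nonneg ((Ql l₀).coeff (n-1)), norm_nonneg a]
  have hNdeg_le : N.natDegree ≤ (n-1) := by
    rw [hNdef]
    refine (Polynomial.natDegree_sub_le _ _).trans ?_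
    have h1 : (Polynomial.C c₀ * Pl l₀).natDegree ≤ (n-1) :=
      (Polynomial.natDegree_C_mul_le _ _).trans (by rw [Pl_natDegree, hl₀len])
    have h2 : (Polynomial.C a * Ql l₀).natDegree ≤ (n-1) :=
      (Polynomial.natDegree_C_mul_le _ _).trans (by rw [← hl₀len]; exact Ql_natDegree_le l₀)
    omega
  have hNdeg : N.natDegree = (n-1) :=
    le_antisymm hNdeg_le (Polynomial.le_natDegree_of_ne_zero hNc0)
  set L : ℂ := N.leadingCoeff with hLdef
  have hLcoeff : L = N.coeff (n-1) := by rw [hLdef, Polynomial.leadingCoeff, hNdeg]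
  have hLne : L ≠ 0 := by rw [hLcoeff]; exact hNc0
  have hsplit : Polynomial.Splits N := IsAlgClosed.splits N
  have hcard : Multiset.card N.roots = (n-1) :=
    ((Polynomial.splits_iff_card_roots).mp hsplit).trans hNdeg
  set lr : List ℂ := N.roots.toList with hlrdef
  have hlrlen : lr.length = (n-1) := by rw [hlrdef, Multiset.length_toList, hcard]
  have hlrmem : ∀ x ∈ lr, ‖x‖ ≤ 1 := by
    intro x hx
    rw [hlrdef, Multiset.mem_toList] at hx
    have hNne : N ≠ 0 := fun h => hNc0 (by simp [h])
    have hroot : N.eval x = 0 := Polynomial.isRoot_of_mem_roots hx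
    exact root_bound l₀ hl₀mem hc₀ ha1 (by rw [← hNdef]; exact hroot)
  have hNfac : N = Polynomial.C L * Pl lr := by
    have h1 := hsplit.eq_prod_roots
    rw [h1]
    congr 1
    rw [hlrdef]
    unfold OBO.Pl
    conv_lhs => rw [← Multiset.coe_toList N.roots]
    rw [Multiset.map_coe, Multiset.prod_coe]
  -- the denominator polynomial identity
  have hcc : (starRingEnd ℂ) c₀ * c₀ = 1 := by
    rw [mul_comm, Complex.mul_conj, Complex.normSq_eq_norm_sq, hc₀]
    norm_num
  have hDpoly : Ql l₀ - Polynomial.C ((starRingEnd ℂ) a * c₀) * Pl l₀ =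
      Polynomial.C (c₀ * (starRingEnd ℂ) L) * Ql lr := by
    apply Polynomial.eq_of_infinite_eval_eq
    have hinf : ({(0:ℂ)}ᶜ : Set ℂ).Infinite := (Set.finite_singleton (0:ℂ)).infinite_compl
    refine Set.Infinite.mono ?_ hinf
    intro z hz
    · have hz0 : z ≠ 0 := by simpa using hz
      set w : ℂ := ((starRingEnd ℂ) z)⁻¹ with hwdef
      have hNev : c₀ * (Pl l₀).eval w - a * (Ql l₀).eval w = L * (Pl lr).eval w := by
        have h7 := congrArg (Polynomial.eval w) hNfac
        rw [hNdef] at h7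
        simpa [Polynomial.eval_sub, Polynomial.eval_mul, Polynomial.eval_C] using h7
      have hconj := congrArg (starRingEnd ℂ) hNev
      simp only [map_sub, _root_.map_mul] at hconj
      show (Ql l₀ - Polynomial.C ((starRingEnd ℂ) a * c₀) * Pl l₀).eval z = _
      rw [Polynomial.eval_sub, Polynomial.eval_mul, Polynomial.eval_mul, Polynomial.eval_C,
        Polynomial.eval_C]
      rw [reflect_Ql l₀ z hz0, reflect_Pl l₀ z hz0, reflect_Ql lr z hz0, hl₀len, hlrlen, ← hwdef]
      
      linear_combination (z^(n-1) * c₀) * hconj -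
        (z^(n-1) * ((starRingEnd ℂ) ((Pl l₀).eval w))) * hcc
  -- transfer to matrices
  have aeval_C_mul : ∀ (x : ℂ) (p : Polynomial ℂ),
      Polynomial.aeval Ψ (Polynomial.C x * p) = x • Polynomial.aeval Ψ p := by
    intro x p
    rw [_root_.map_mul, Polynomial.aeval_C, ← Algebra.smul_def]
  set AP := Polynomial.aeval Ψ (Pl l₀) with hAPdef
  set AQ := Polynomial.aeval Ψ (Ql l₀) with hAQdef
  set APr := Polynomial.aeval Ψ (Pl lr) with hAPrdef
  set AQr := Polynomial.aeval Ψ (Ql lr) with hAQrdef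
  have hMQ : (B θ₀ α₀) * AQ = c₀ • AP := by
    rw [hM, smul_mul_assoc, F_mul_aeval_Ql Ψ hspec l₀ hl₀mem]
  have hNm : c₀ • AP - a • AQ = L • APr := by
    have h1 := congrArg (Polynomial.aeval Ψ) hNfac
    rw [hNdef] at h1
    rw [map_sub, aeval_C_mul, aeval_C_mul] at h1
    rw [aeval_C_mul] at h1
    exact h1
  have hDm : AQ - ((starRingEnd ℂ) a * c₀) • AP = (c₀ * (starRingEnd ℂ) L) • AQr := by
    have h1 := congrArg (Polynomial.aeval Ψ) hDpoly
    rw [map_sub, aeval_C_mul, aeval_C_mul] at h1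
    exact h1
  -- the new Blaschke product
  set c₁ : ℂ := L / (c₀ * (starRingEnd ℂ) L) with hc₁def
  have hc₁abs : ‖c₁‖ = 1 := by
    rw [hc₁def, norm_div, norm_mul, hc₀, Complex.norm_conj, one_mul,
      div_self (norm_ne_zero_iff.mpr hLne)]
  set θ' : ℝ := c₁.arg with hθ'def
  have hexp : Complex.exp ((θ' : ℂ) * I) = c₁ := by
    have h1 := Complex.norm_mul_exp_arg_mul_I c₁
    rw [hc₁abs] at h1
    simpa using h1
  have hlrlen' : lr.length = n - 1 := hlrlen
  set β : Fin (n-1) → ℂ := fun j => lr.get (Fin.cast hlrlen'.symm j) with hβdef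
  have hofn : List.ofFn β = lr := by
    apply List.ext_getElem
    · simp [hlrlen']
    · intro i h1 h2
      simp [hβdef]
  have hβabs : ∀ j, ‖β j‖ ≤ 1 := by
    intro j
    exact hlrmem _ (lr.get_mem _)
  have hBr : B θ' β = c₁ • F Ψ lr := by
    rw [hB θ' β, hexp]
    congr 1
    rw [← hofn]
    unfold OBO.F OBO.fac
    rw [List.map_ofFn]
    rfl
  -- key matrix identity
  have hQunit : IsUnit AQ := unit_aeval_Ql Ψ hspec l₀ hl₀mem
  have hstar : B θ' β * (1 - (starRingEnd ℂ) a • (B θ₀ α₀)) = (B θ₀ α₀) - a • 1 := by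
    refine IsUnit.mul_right_cancel hQunit ?_
    have e1 : ((B θ₀ α₀) - a • 1) * AQ = L • APr := by
      rw [sub_mul, smul_mul_assoc, one_mul, hMQ, ← hNm]
    have h3 : (1 - (starRingEnd ℂ) a • (B θ₀ α₀)) * AQ = (c₀ * (starRingEnd ℂ) L) • AQr := by
      rw [sub_mul, one_mul, smul_mul_assoc, hMQ, smul_smul, ← hDm]
    rw [mul_assoc, h3, mul_smul_comm, hBr, smul_mul_assoc,
      F_mul_aeval_Ql Ψ hspec lr hlrmem, smul_smul, e1]
    congr 1
    have hne : c₀ * (starRingEnd ℂ) L ≠ 0 :=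
      mul_ne_zero hc₀ne (by simpa using hLne)
    rw [hc₁def, ← mul_div_assoc, mul_div_cancel_left₀ _ hne]
  -- pass to operators
  have hTmap := congrArg (Matrix.toEuclideanCLM (𝕜 := ℂ)) hstar
  simp only [_root_.map_mul, _root_.map_sub, _root_.map_smul, _root_.map_one] at hTmap
  set Tb := Matrix.toEuclideanCLM (𝕜 := ℂ) (B θ' β) with hTbdef
  have happ := congrArg (fun (T : EuclideanSpace ℂ (Fin n) →L[ℂ] EuclideanSpace ℂ (Fin n)) => T v)
    hTmap
  simp only [ContinuousLinearMap.mul_apply, ContinuousLinearMap.sub_apply,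
    ContinuousLinearMap.smul_apply, ContinuousLinearMap.one_apply] at happ
  have hTbnorm : ‖Tb‖ ≤ s := hmax θ' β hβabs
  have hineq : ‖M' v - a • v‖ ≤ s * ‖v - (starRingEnd ℂ) a • M' v‖ := by
    rw [← happ]
    calc ‖Tb (v - (starRingEnd ℂ) a • M' v)‖
        ≤ ‖Tb‖ * ‖v - (starRingEnd ℂ) a • M' v‖ := Tb.le_opNorm _
      _ ≤ s * ‖v - (starRingEnd ℂ) a • M' v‖ :=
          mul_le_mul_of_nonneg_right hTbnorm (norm_nonneg _)
  -- numeric endgame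
  have h1 : ‖M' v - a • v‖^2 = s^2 - 2*(a*c).re + (‖a‖)^2 := by
    rw [@norm_sub_sq ℂ _ _ _ _ (M' v) (a • v), hvnorm, inner_smul_right, norm_smul, hv]
    rw [hcdef]
    simp
  have h2 : ‖v - (starRingEnd ℂ) a • M' v‖^2 = 1 - 2*(a*c).re + (‖a‖)^2 * s^2 := by
    rw [@norm_sub_sq ℂ _ _ _ _ v ((starRingEnd ℂ) a • M' v), hv, inner_smul_right, norm_smul,
      hvnorm]
    have hvm : (inner ℂ v (M' v) : ℂ) = (starRingEnd ℂ) c := by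
      rw [hcdef, ← inner_conj_symm]
    rw [hvm]
    have hre : (RCLike.re ((starRingEnd ℂ) a * (starRingEnd ℂ) c) : ℝ) = (a*c).re := by
      rw [← _root_.map_mul]
      simp
    rw [hre, Complex.norm_conj]
    ring
  have hsq : ‖M' v - a • v‖^2 ≤ s^2 * ‖v - (starRingEnd ℂ) a • M' v‖^2 := by
    have := pow_le_pow_left₀ (norm_nonneg _) hineq 2
    calc ‖M' v - a • v‖^2 ≤ (s * ‖v - (starRingEnd ℂ) a • M' v‖)^2 := this
      _ = s^2 * ‖v - (starRingEnd ℂ) a • M' v‖^2 := by ring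
  rw [h1, h2] at hsq
  set q : ℝ := Complex.normSq c with hqdef
  have hnsq : 0 < q := Complex.normSq_pos.mpr hc
  have hac : (a*c).re = t * q := by
    have h4 : a * c = ((t * q : ℝ) : ℂ) := by
      rw [hadef, hqdef, mul_assoc, mul_comm ((starRingEnd ℂ) c) c, Complex.mul_conj]
      push_cast
      ring
    rw [h4, Complex.ofReal_re]
  have habs2 : (‖a‖)^2 = t^2 * q := by
    rw [haabs, mul_pow, hqdef, ← Complex.sq_norm]
  rw [hac, habs2] at hsq
  have hts : t * (s^2+1) ≤ 1 := by
    calc t*(s^2+1) ≤ (s^2+1)⁻¹ * (s^2+1) :=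
      mul_le_mul_of_nonneg_right (min_le_left _ _) (by positivity)
    _ = 1 := by field_simp
  exact OBO.endgame hs1 ht0 hnsq hts hsq
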